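/- Let Γ ∪ {A} be a set of PML formulas containing no classical and no intuitionistic variables. Then Γ ⊢_(i) A if and only if Γ ⊢_(m) A. -/
import Mathlib


namespace PML

/-- The three kinds of propositional variables: minimal, intuitionistic, classical. -/
inductive Kind : Type
  | m | i | c
deriving DecidableEq

/-- Formulas of propositional mixed logic (PML). -/
inductive Formula : Type
  | var : Kind → ℕ → Formula
  | bot : Formula
  | and : Formula → Formula → Formula
  | or : Formula → Formula → Formula
  | imp : Formula → Formula → Formula
deriving DecidableEq

namespace Formula

/-- ¬A abbreviates A → ⊥. -/
def neg (A : Formula) : Formula := imp A bot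

/-- All variables occurring in the formula have a kind satisfying `p`. -/
def onlyKinds (p : Kind → Prop) : Formula → Prop
  | var k _ => p k
  | bot => True
  | and A B => onlyKinds p A ∧ onlyKinds p B
  | or A B => onlyKinds p A ∧ onlyKinds p B
  | imp A B => onlyKinds p A ∧ onlyKinds p B

/-- A classical formula: only classical variables. -/
def IsClassical (A : Formula) : Prop := onlyKinds (fun k => k = Kind.c) A

/-- An intuitionistic formula: only intuitionistic and classical variables. -/
def IsIntuitionistic (A : Formula) : Prop := onlyKinds (fun k => k = Kind.i ∨ k = Kind.c) A

/-- A formula without classical variables. -/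
def NoClassicalVar (A : Formula) : Prop := onlyKinds (fun k => k ≠ Kind.c) A

/-- A formula without classical and without intuitionistic variables. -/
def OnlyMinimalVar (A : Formula) : Prop := onlyKinds (fun k => k = Kind.m) A

/-- A formula without intuitionistic variables. -/
def NoIntuitVar (A : Formula) : Prop := onlyKinds (fun k => k ≠ Kind.i) A

/-- Substitution of the formula `F` for every occurrence of the variable of kind `k`, index `n`. -/
def subst (F : Formula) (k : Kind) (n : ℕ) : Formula → Formula
  | var k' n' => if k' = k ∧ n' = n then F else var k' n'
  | bot => bot
  | and A B => and (subst F k n A) (subst F k n B)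
  | or A B => or (subst F k n A) (subst F k n B)
  | imp A B => imp (subst F k n A) (subst F k n B)

end Formula

/-- Which optional rules are available: the intuitionistic absurdity rule (⊥_i),
the classical absurdity rule (⊥_c), and whether (∨_E) is unrestricted
(`fullOrE = false` gives the PML^∨ restriction). -/
structure Rules where
  botI : Bool
  botC : Bool
  fullOrE : Bool

/-- Natural deduction for mixed logic, parametrized by the available rules. -/
inductive Deriv (R : Rules) : Set Formula → Formula → Prop
  | ax (A : Formula) : Deriv R {A} A
  | weak {Γ : Set Formula} {A : Formula} (B : Formula) : Deriv R Γ A → Deriv R (insert B Γ) A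
  | andI {Γ₁ Γ₂ : Set Formula} {A₁ A₂ : Formula} :
      Deriv R Γ₁ A₁ → Deriv R Γ₂ A₂ → Deriv R (Γ₁ ∪ Γ₂) (A₁.and A₂)
  | andE₁ {Γ : Set Formula} {A₁ A₂ : Formula} : Deriv R Γ (A₁.and A₂) → Deriv R Γ A₁
  | andE₂ {Γ : Set Formula} {A₁ A₂ : Formula} : Deriv R Γ (A₁.and A₂) → Deriv R Γ A₂
  | orI₁ {Γ : Set Formula} {A₁ : Formula} (A₂ : Formula) : Deriv R Γ A₁ → Deriv R Γ (A₁.or A₂)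
  | orI₂ {Γ : Set Formula} {A₂ : Formula} (A₁ : Formula) : Deriv R Γ A₂ → Deriv R Γ (A₁.or A₂)
  | orE {Γ₁ Γ₂ Γ₃ : Set Formula} {A₁ A₂ B : Formula} :
      (R.fullOrE = true ∨ ((A₁.or A₂).IsClassical → B.IsClassical)) →
      Deriv R Γ₁ (A₁.or A₂) → Deriv R (insert A₁ Γ₂) B → Deriv R (insert A₂ Γ₃) B →
      Deriv R (Γ₁ ∪ Γ₂ ∪ Γ₃) B
  | impI {Γ : Set Formula} {A₁ A₂ : Formula} : Deriv R (insert A₁ Γ) A₂ → Deriv R Γ (A₁.imp A₂)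
  | impE {Γ₁ Γ₂ : Set Formula} {A₁ A₂ : Formula} :
      Deriv R Γ₁ (A₁.imp A₂) → Deriv R Γ₂ A₁ → Deriv R (Γ₁ ∪ Γ₂) A₂
  | botI {Γ : Set Formula} {A : Formula} :
      R.botI = true → A.IsIntuitionistic → Deriv R Γ Formula.bot → Deriv R Γ A
  | botC {Γ : Set Formula} {A : Formula} :
      R.botC = true → A.IsClassical → Deriv R Γ (A.neg.neg) → Deriv R Γ A

/-- Γ ⊢_pml A : full mixed logic. -/
def DerivPML : Set Formula → Formula → Prop := Deriv ⟨true, true, true⟩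

/-- Γ ⊢_(i) A : derivable without the rule (⊥_c). -/
def DerivI : Set Formula → Formula → Prop := Deriv ⟨true, false, true⟩

/-- Γ ⊢_(m) A : derivable without the rules (⊥_i) and (⊥_c). -/
def DerivM : Set Formula → Formula → Prop := Deriv ⟨false, false, true⟩

/-- Γ ⊢_(i') A : derivable without the rule (⊥_i). -/
def DerivI' : Set Formula → Formula → Prop := Deriv ⟨false, true, true⟩

/-- Γ ⊢^∨ A : derivable in PML^∨ (restricted ∨-elimination). -/
def DerivVee : Set Formula → Formula → Prop := Deriv ⟨true, true, false⟩

/-- A Kripke frame over a poset `W`: a monotone forcing relation on atoms. -/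
structure KripkeFrame (W : Type) [PartialOrder W] where
  fvar : W → Kind → ℕ → Prop
  fbot : W → Prop
  mono_var : ∀ {a b : W} (k : Kind) (n : ℕ), a ≤ b → fvar a k n → fvar b k n
  mono_bot : ∀ {a b : W}, a ≤ b → fbot a → fbot b

variable {W : Type} [PartialOrder W]

/-- Forcing, extended to compound formulas. -/
def KripkeFrame.force (M : KripkeFrame W) : W → Formula → Prop
  | a, .var k n => M.fvar a k n
  | a, .bot => M.fbot a
  | a, .and A B => M.force a A ∧ M.force a B
  | a, .or A B => M.force a A ∨ M.force a B
  | a, .imp A B => ∀ b : W, a ≤ b → M.force b A → M.force b B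

/-- A formula is valid in a model iff it is forced at every node. -/
def KripkeFrame.Valid (M : KripkeFrame W) (A : Formula) : Prop := ∀ a : W, M.force a A

/-- A mixed Kripke model: (2) a node forcing ⊥ forces every intuitionistic or classical
variable; (3) a classical variable forced at a node not forcing ⊥ is forced everywhere. -/
def IsMixed (M : KripkeFrame W) : Prop :=
  (∀ (a : W) (k : Kind) (n : ℕ), M.fbot a → (k = Kind.i ∨ k = Kind.c) → M.fvar a k n) ∧
  (∀ (a : W) (n : ℕ), M.fvar a Kind.c n → ¬ M.fbot a → ∀ b : W, M.fvar b Kind.c n)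

/-- An intuitionistic mixed Kripke model: restricted to atoms in 𝒱_m ∪ 𝒱_i ∪ {⊥}
(no classical atom is forced) and a node forcing ⊥ forces every intuitionistic variable. -/
def IsIntMixed (M : KripkeFrame W) : Prop :=
  (∀ (a : W) (n : ℕ), ¬ M.fvar a Kind.c n) ∧
  (∀ (a : W) (n : ℕ), M.fbot a → M.fvar a Kind.i n)

/-- A minimal mixed Kripke model: restricted to atoms in 𝒱_m ∪ {⊥}. -/
def IsMinMixed (M : KripkeFrame W) : Prop :=
  (∀ (a : W) (n : ℕ), ¬ M.fvar a Kind.i n) ∧ (∀ (a : W) (n : ℕ), ¬ M.fvar a Kind.c n)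

/-- Semantic entailment: every mixed Kripke model validating all of Γ validates A. -/
def Entails (Γ : Set Formula) (A : Formula) : Prop :=
  ∀ (W : Type) [PartialOrder W] [Nonempty W] (M : KripkeFrame W),
    IsMixed M → (∀ B ∈ Γ, M.Valid B) → M.Valid A

/-- A saturated set of formulas. -/
def Saturated (Δ : Set Formula) : Prop :=
  ∀ C D : Formula, DerivPML Δ (C.or D) → C ∈ Δ ∨ D ∈ Δ

/-- The restriction 𝒦_(i) of a model to atoms in 𝒱_m ∪ 𝒱_i ∪ {⊥}. -/
def KripkeFrame.restrictI (M : KripkeFrame W) : KripkeFrame W where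
  fvar a k n := k ≠ Kind.c ∧ M.fvar a k n
  fbot := M.fbot
  mono_var := by
    intro a b k n hab h
    exact ⟨h.1, M.mono_var k n hab h.2⟩
  mono_bot := fun hab h => M.mono_bot hab h

/-- The restriction 𝒦_(m) of a model to atoms in 𝒱_m ∪ {⊥}. -/
def KripkeFrame.restrictM (M : KripkeFrame W) : KripkeFrame W where
  fvar a k n := k = Kind.m ∧ M.fvar a k n
  fbot := M.fbot
  mono_var := by
    intro a b k n hab h
    exact ⟨h.1, M.mono_var k n hab h.2⟩
  mono_bot := fun hab h => M.mono_bot hab h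

/-- The translation ^m : intuitionistic variables X_i are sent to ¬¬ m(X_i). -/
def Formula.transM (m : ℕ → ℕ) : Formula → Formula
  | .var Kind.i n => ((Formula.var Kind.m (m n)).neg).neg
  | .var k n => .var k n
  | .bot => .bot
  | .and A B => .and (Formula.transM m A) (Formula.transM m B)
  | .or A B => .or (Formula.transM m A) (Formula.transM m B)
  | .imp A B => .imp (Formula.transM m A) (Formula.transM m B)

/-- The translation ^i : classical variables X_c are sent to ¬¬ i(X_c), and
disjunctions are doubly negated. -/
def Formula.transI (f : ℕ → ℕ) : Formula → Formula
  | .var Kind.c n => ((Formula.var Kind.i (f n)).neg).neg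
  | .var k n => .var k n
  | .bot => .bot
  | .and A B => .and (Formula.transI f A) (Formula.transI f B)
  | .or A B => (((Formula.transI f A).or (Formula.transI f B)).neg).neg
  | .imp A B => .imp (Formula.transI f A) (Formula.transI f B)

end PML

namespace PML
open Formula

/-- Replace all non-minimal variables by ⊥. -/
def Formula.toMin : Formula → Formula
  | .var Kind.m n => .var Kind.m n
  | .var Kind.i _ => .bot
  | .var Kind.c _ => .bot
  | .bot => .bot
  | .and A B => .and A.toMin B.toMin
  | .or A B => .or A.toMin B.toMin
  | .imp A B => .imp A.toMin B.toMin

lemma toMin_eq_of_min : ∀ {A : Formula}, A.OnlyMinimalVar → A.toMin = A := by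
  intro A h
  induction A with
  | var k n =>
    cases k
    · rfl
    · exact absurd h (by simp [Formula.OnlyMinimalVar, Formula.onlyKinds])
    · exact absurd h (by simp [Formula.OnlyMinimalVar, Formula.onlyKinds])
  | bot => rfl
  | and A B ihA ihB =>
    obtain ⟨h1, h2⟩ := h
    simp [Formula.toMin, ihA h1, ihB h2]
  | or A B ihA ihB =>
    obtain ⟨h1, h2⟩ := h
    simp [Formula.toMin, ihA h1, ihB h2]
  | imp A B ihA ihB =>
    obtain ⟨h1, h2⟩ := h
    simp [Formula.toMin, ihA h1, ihB h2]

lemma cut_bot {R : Rules} {Γ : Set Formula} {A : Formula}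
    (h1 : Deriv R Γ Formula.bot) (h2 : Deriv R {Formula.bot} A) : Deriv R Γ A := by
  have h3 : Deriv R (∅ : Set Formula) (Formula.bot.imp A) :=
    Deriv.impI (by simpa using h2)
  simpa using Deriv.impE h3 h1

lemma derivM_bot_toMin : ∀ {A : Formula}, A.IsIntuitionistic →
    Deriv ⟨false, false, true⟩ {Formula.bot} A.toMin := by
  intro A h
  induction A with
  | var k n =>
    cases k
    · exact absurd h (by simp [Formula.IsIntuitionistic, Formula.onlyKinds])
    · exact Deriv.ax _
    · exact Deriv.ax _
  | bot => exact Deriv.ax _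
  | and A B ihA ihB =>
    obtain ⟨h1, h2⟩ := h
    have := Deriv.andI (ihA h1) (ihB h2)
    simpa [Formula.toMin] using this
  | or A B ihA ihB =>
    obtain ⟨h1, _⟩ := h
    exact Deriv.orI₁ _ (ihA h1)
  | imp A B ihA ihB =>
    obtain ⟨_, h2⟩ := h
    exact Deriv.impI (Deriv.weak _ (ihB h2))

lemma deriv_toMin {Γ : Set Formula} {A : Formula} (h : DerivI Γ A) :
    Deriv ⟨false, false, true⟩ (Formula.toMin '' Γ) A.toMin := by
  induction h with
  | ax A => simpa [Set.image_singleton] using Deriv.ax A.toMin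
  | weak B _ ih => simpa [Set.image_insert_eq] using Deriv.weak B.toMin ih
  | andI _ _ ih1 ih2 => simpa [Set.image_union, Formula.toMin] using Deriv.andI ih1 ih2
  | andE₁ _ ih => exact Deriv.andE₁ ih
  | andE₂ _ ih => exact Deriv.andE₂ ih
  | orI₁ A₂ _ ih => exact Deriv.orI₁ _ ih
  | orI₂ A₁ _ ih => exact Deriv.orI₂ _ ih
  | orE _ _ _ _ ih1 ih2 ih3 =>
    have := Deriv.orE (Or.inl rfl) ih1
      (by simpa [Set.image_insert_eq] using ih2)
      (by simpa [Set.image_insert_eq] using ih3)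
    simpa [Set.image_union] using this
  | impI _ ih => exact Deriv.impI (by simpa [Set.image_insert_eq] using ih)
  | impE _ _ ih1 ih2 => simpa [Set.image_union] using Deriv.impE ih1 ih2
  | botI _ hint _ ih => exact cut_bot ih (derivM_bot_toMin hint)
  | botC hb => simp at hb

lemma derivM_to_derivI {Γ : Set Formula} {A : Formula} (h : DerivM Γ A) : DerivI Γ A := by
  induction h with
  | ax A => exact Deriv.ax A
  | weak B _ ih => exact Deriv.weak B ih
  | andI _ _ ih1 ih2 => exact Deriv.andI ih1 ih2
  | andE₁ _ ih => exact Deriv.andE₁ ih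
  | andE₂ _ ih => exact Deriv.andE₂ ih
  | orI₁ A₂ _ ih => exact Deriv.orI₁ _ ih
  | orI₂ A₁ _ ih => exact Deriv.orI₂ _ ih
  | orE _ _ _ _ ih1 ih2 ih3 => exact Deriv.orE (Or.inl rfl) ih1 ih2 ih3
  | impI _ ih => exact Deriv.impI ih
  | impE _ _ ih1 ih2 => exact Deriv.impE ih1 ih2
  | botI hb => simp at hb
  | botC hb => simp at hb

end PML

/-- For Γ ∪ {A} without classical and intuitionistic variables, Γ ⊢_(i) A iff Γ ⊢_(m) A. -/
theorem PML.derivI_iff_derivM (Γ : Set PML.Formula) (A : PML.Formula)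
    (hΓ : ∀ B ∈ Γ, B.OnlyMinimalVar) (hA : A.OnlyMinimalVar) :
    PML.DerivI Γ A ↔ PML.DerivM Γ A := by
  constructor
  · intro h
    have himg : PML.Formula.toMin '' Γ = Γ := by
      apply Set.Subset.antisymm
      · rintro _ ⟨B, hB, rfl⟩
        rw [PML.toMin_eq_of_min (hΓ B hB)]
        exact hB
      · intro B hB
        exact ⟨B, hB, PML.toMin_eq_of_min (hΓ B hB)⟩
    have := PML.deriv_toMin h
    rw [himg, PML.toMin_eq_of_min hA] at this
    exact this
  · exact PML.derivM_to_derivI
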